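/- (Two-level distributed HAPOD error bound) Let S = S_1 ⊎ ... ⊎ S_r be a partition of a finite family of vectors in a finite-dimensional Hilbert space V. For each i, let Q_i be the set of scaled POD modes of S_i with ℓ²-truncation error at most ε_i (i.e., ∑_{s∈S_i}‖s − P_i s‖² ≤ ε_i² with P_i the projection onto span Q_i). Let P be the projection onto the span of the POD modes of ⋃_i Q_i with truncation error at most ε_ρ. Then ∑_{s∈S} ‖s − P(s)‖² ≤ ε_ρ² + ∑_{i=1}^r ε_i². -/

import Mathlib

open Finset RealInnerProductSpace

section Aux

variable {V : Type*} [NormedAddCommGroup V] [InnerProductSpace ℝ V] [FiniteDimensional ℝ V]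

lemma hapod_aux_min (W : Submodule ℝ V) (v w : V) (hw : w ∈ W) :
    ‖v - (Submodule.orthogonalProjectionOnto W v : V)‖ ≤ ‖v - w‖ := by
  have hsplit : v - w = (v - (Submodule.orthogonalProjectionOnto W v : V)) +
      ((Submodule.orthogonalProjectionOnto W v : V) - w) := by abel
  have hmem : (Submodule.orthogonalProjectionOnto W v : V) - w ∈ W :=
    W.sub_mem (Submodule.orthogonalProjectionOnto W v).2 hw
  have horth : ⟪v - (Submodule.orthogonalProjectionOnto W v : V),
      (Submodule.orthogonalProjectionOnto W v : V) - w⟫ = 0 := by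
    have h := W.sub_starProjection_mem_orthogonal v
    rw [Submodule.starProjection_apply] at h
    have := (Submodule.mem_orthogonal W _).mp h _ hmem
    rwa [real_inner_comm] at this
  have := norm_add_sq_eq_norm_sq_add_norm_sq_of_inner_eq_zero _ _ horth
  rw [hsplit]
  nlinarith [norm_nonneg ((Submodule.orthogonalProjectionOnto W v : V) - w),
    norm_nonneg (v - (Submodule.orthogonalProjectionOnto W v : V)),
    norm_nonneg ((v - (Submodule.orthogonalProjectionOnto W v : V)) + ((Submodule.orthogonalProjectionOnto W v : V) - w))]

lemma hapod_aux_norm_le (W : Submodule ℝ V) (v : V) :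
    ‖v - (Submodule.orthogonalProjectionOnto W v : V)‖ ≤ ‖v‖ := by
  simpa using hapod_aux_min W v 0 W.zero_mem

/-- If `lam` is an orthonormal family of `k` vectors in `ℝ^k`, then for any vectors `v j`,
`∑ m ‖∑ j lam j m • v j‖² = ∑ j ‖v j‖²`. -/
lemma hapod_aux_combo {k : ℕ} (lam : Fin k → EuclideanSpace ℝ (Fin k))
    (hlam : Orthonormal ℝ lam) (v : Fin k → V) :
    ∑ m, ‖∑ j, lam j m • v j‖ ^ 2 = ∑ j, ‖v j‖ ^ 2 := by
  have key : ∀ j j', ∑ m, lam j m * lam j' m = if j = j' then (1 : ℝ) else 0 := by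
    intro j j'
    have h := orthonormal_iff_ite.mp hlam j j'
    simpa [PiLp.inner_apply, RCLike.inner_apply, conj_trivial, mul_comm] using h
  have h1 : ∀ m, ‖∑ j, lam j m • v j‖ ^ 2
      = ∑ j, ∑ j', (lam j m * lam j' m) * ⟪v j, v j'⟫ := by
    intro m
    rw [← real_inner_self_eq_norm_sq, sum_inner]
    refine Finset.sum_congr rfl fun j _ => ?_
    rw [real_inner_smul_left, inner_sum, Finset.mul_sum]
    refine Finset.sum_congr rfl fun j' _ => ?_
    rw [real_inner_smul_right]; ring
  calc ∑ m, ‖∑ j, lam j m • v j‖ ^ 2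
      = ∑ m, ∑ j, ∑ j', (lam j m * lam j' m) * ⟪v j, v j'⟫ :=
        Finset.sum_congr rfl fun m _ => h1 m
    _ = ∑ j, ∑ j', (∑ m, lam j m * lam j' m) * ⟪v j, v j'⟫ := by
        rw [Finset.sum_comm]
        refine Finset.sum_congr rfl fun j _ => ?_
        rw [Finset.sum_comm]
        refine Finset.sum_congr rfl fun j' _ => ?_
        rw [Finset.sum_mul]
    _ = ∑ j, ‖v j‖ ^ 2 := by
        simp [key, ite_mul, real_inner_self_eq_norm_sq]

end Aux

/-- two-level distributed HAPOD error bound: if each local family `s i` is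
compressed by a POD with ℓ²-truncation error at most `ε i` (keeping the first `N i` scaled
modes `σᵢⱼ • φᵢⱼ`), and the concatenation of all retained scaled modes is compressed by a
second POD with truncation error at most `ερ` (keeping `M` modes `Φ`), then the total
squared projection error of all snapshots onto the final HAPOD space is at most
`ερ² + ∑ᵢ εᵢ²`. -/
theorem distributed_hapod_error_bound
    {V : Type*} [NormedAddCommGroup V] [InnerProductSpace ℝ V] [FiniteDimensional ℝ V]
    {r : ℕ} (k N : Fin r → ℕ) (hN : ∀ i, N i ≤ k i)
    (s : ∀ i, Fin (k i) → V)
    (σ : ∀ i, Fin (k i) → ℝ) (φ : ∀ i, Fin (k i) → V)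
    (lam : ∀ i, Fin (k i) → EuclideanSpace ℝ (Fin (k i)))
    (hσa : ∀ i, Antitone (σ i)) (hσ0 : ∀ i j, 0 ≤ σ i j)
    (hφ : ∀ i, Orthonormal ℝ (φ i)) (hlam : ∀ i, Orthonormal ℝ (lam i))
    (hs : ∀ i m, s i m = ∑ j, (σ i j * lam i j m) • φ i j)
    (ε : Fin r → ℝ)
    (hloc : ∀ i, ∑ j ∈ univ.filter (fun j : Fin (k i) => N i ≤ (j : ℕ)), σ i j ^ 2 ≤ ε i ^ 2)
    {K : ℕ} (e : ((i : Fin r) × Fin (N i)) ≃ Fin K)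
    (τ : Fin K → ℝ) (Φ : Fin K → V) (μ : Fin K → EuclideanSpace ℝ (Fin K))
    (hτa : Antitone τ) (hτ0 : ∀ j, 0 ≤ τ j)
    (hΦ : Orthonormal ℝ Φ) (hμ : Orthonormal ℝ μ)
    (hQ : ∀ i (n : Fin (N i)),
      σ i (Fin.castLE (hN i) n) • φ i (Fin.castLE (hN i) n)
        = ∑ jK, (τ jK * μ jK (e ⟨i, n⟩)) • Φ jK)
    (M : ℕ) (hM : M ≤ K) (ερ : ℝ)
    (hroot : ∑ jK ∈ univ.filter (fun jK : Fin K => M ≤ (jK : ℕ)), τ jK ^ 2 ≤ ερ ^ 2) :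
    ∑ i, ∑ m, ‖s i m - (Submodule.orthogonalProjectionOnto
        (Submodule.span ℝ (Set.range fun n : Fin M => Φ (Fin.castLE hM n))) (s i m) : V)‖ ^ 2
      ≤ ερ ^ 2 + ∑ i, ε i ^ 2 := by
  set W : Submodule ℝ V :=
    Submodule.span ℝ (Set.range fun n : Fin M => Φ (Fin.castLE hM n)) with hW
  set E : V → V := fun v => v - (Submodule.orthogonalProjectionOnto W v : V) with hEdef
  -- E is "linear" on the combinations we use
  have hEsum : ∀ {ι : Type} [Fintype ι] (c : ι → ℝ) (u : ι → V),
      E (∑ j, c j • u j) = ∑ j, c j • E (u j) := by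
    intro ι _ c u
    simp only [hEdef, map_sum, map_smul, Submodule.coe_sum, SetLike.val_smul, smul_sub,
      Finset.sum_sub_distrib]
  -- scaled modes
  set q : ∀ i, Fin (N i) → V :=
    fun i n => σ i (Fin.castLE (hN i) n) • φ i (Fin.castLE (hN i) n) with hq
  -- Step 1: local bound
  have step1 : ∀ i, ∑ m, ‖E (s i m)‖ ^ 2
      ≤ ε i ^ 2 + ∑ n : Fin (N i), ‖E (q i n)‖ ^ 2 := by
    intro i
    set v : Fin (k i) → V :=
      fun j => if (j : ℕ) < N i then E (σ i j • φ i j) else σ i j • φ i j with hv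
    have hcombo : ∀ m, s i m - ∑ j, lam i j m • v j ∈ W := by
      intro m
      have hrw : s i m - ∑ j, lam i j m • v j
          = ∑ j, lam i j m • ((σ i j • φ i j) - v j) := by
        rw [hs i m, ← Finset.sum_sub_distrib]
        refine Finset.sum_congr rfl fun j _ => ?_
        rw [smul_sub, smul_smul, mul_comm]
      rw [hrw]
      refine Submodule.sum_mem _ fun j _ => Submodule.smul_mem _ _ ?_
      by_cases h : (j : ℕ) < N i
      · simp only [hv, if_pos h, hEdef, sub_sub_cancel]
        exact (Submodule.orthogonalProjectionOnto W (σ i j • φ i j)).2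
      · simp only [hv, if_neg h, sub_self]
        exact W.zero_mem
    have hb : ∀ m, ‖E (s i m)‖ ^ 2 ≤ ‖∑ j, lam i j m • v j‖ ^ 2 := by
      intro m
      have h1 : ‖E (s i m)‖ ≤ ‖s i m - (s i m - ∑ j, lam i j m • v j)‖ :=
        hapod_aux_min W (s i m) _ (hcombo m)
      rw [sub_sub_cancel] at h1
      exact pow_le_pow_left₀ (norm_nonneg _) h1 2
    have h2 : ∑ m, ‖E (s i m)‖ ^ 2 ≤ ∑ j, ‖v j‖ ^ 2 := by
      calc ∑ m, ‖E (s i m)‖ ^ 2 ≤ ∑ m, ‖∑ j, lam i j m • v j‖ ^ 2 :=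
            Finset.sum_le_sum fun m _ => hb m
        _ = ∑ j, ‖v j‖ ^ 2 := hapod_aux_combo (lam i) (hlam i) v
    have hsplit : ∑ j, ‖v j‖ ^ 2
        = (∑ j ∈ univ.filter (fun j : Fin (k i) => N i ≤ (j : ℕ)), ‖v j‖ ^ 2)
          + ∑ j ∈ univ.filter (fun j : Fin (k i) => ¬ N i ≤ (j : ℕ)), ‖v j‖ ^ 2 :=
      (Finset.sum_filter_add_sum_filter_not _ _ _).symm
    have htail : ∑ j ∈ univ.filter (fun j : Fin (k i) => N i ≤ (j : ℕ)), ‖v j‖ ^ 2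
        ≤ ε i ^ 2 := by
      refine le_trans (le_of_eq (Finset.sum_congr rfl fun j hj => ?_)) (hloc i)
      rw [Finset.mem_filter] at hj
      have hnot : ¬ (j : ℕ) < N i := not_lt.mpr hj.2
      rw [hv]
      simp only [if_neg hnot]
      rw [norm_smul, Real.norm_eq_abs, (hφ i).1 j, mul_one, sq_abs]
    have hhead : ∑ j ∈ univ.filter (fun j : Fin (k i) => ¬ N i ≤ (j : ℕ)), ‖v j‖ ^ 2
        = ∑ n : Fin (N i), ‖E (q i n)‖ ^ 2 := by
      refine Finset.sum_bij' (fun j hj => (⟨(j : ℕ), by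
        rw [Finset.mem_filter] at hj; exact not_le.mp hj.2⟩ : Fin (N i)))
        (fun n _ => Fin.castLE (hN i) n) ?_ ?_ ?_ ?_ ?_
      · intro j hj; exact Finset.mem_univ _
      · intro n _
        rw [Finset.mem_filter]
        exact ⟨Finset.mem_univ _, not_le.mpr n.2⟩
      · intro j hj; ext; simp
      · intro n _; ext; simp
      · intro j hj
        rw [Finset.mem_filter] at hj
        have hlt : (j : ℕ) < N i := not_le.mp hj.2
        rw [hv]
        simp only [if_pos hlt]
        congr 2 <;> · congr 1; ext; simp
    calc ∑ m, ‖E (s i m)‖ ^ 2 ≤ _ := h2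
      _ = _ := hsplit
      _ ≤ ε i ^ 2 + ∑ n : Fin (N i), ‖E (q i n)‖ ^ 2 := by
          rw [hhead]; exact add_le_add_left htail _
  -- Step 2: global bound on retained modes
  have step2 : ∑ i, ∑ n : Fin (N i), ‖E (q i n)‖ ^ 2 ≤ ερ ^ 2 := by
    have hsig : ∑ i, ∑ n : Fin (N i), ‖E (q i n)‖ ^ 2
        = ∑ p : (i : Fin r) × Fin (N i), ‖E (q p.1 p.2)‖ ^ 2 := by
      rw [Finset.sum_sigma', Finset.univ_sigma_univ]
    have hre : ∑ p : (i : Fin r) × Fin (N i), ‖E (q p.1 p.2)‖ ^ 2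
        = ∑ jK : Fin K, ‖E (q (e.symm jK).1 (e.symm jK).2)‖ ^ 2 :=
      (Equiv.sum_comp e.symm fun p => ‖E (q p.1 p.2)‖ ^ 2).symm
    have hEq : ∀ jK : Fin K, E (q (e.symm jK).1 (e.symm jK).2)
        = ∑ l, μ l jK • (τ l • E (Φ l)) := by
      intro jK
      have h := hQ (e.symm jK).1 (e.symm jK).2
      have he : e ⟨(e.symm jK).1, (e.symm jK).2⟩ = jK := by
        rw [Sigma.eta]; exact e.apply_symm_apply jK
      rw [he] at h
      rw [hq]
      simp only
      rw [h, hEsum (fun l => τ l * μ l jK) Φ]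
      refine Finset.sum_congr rfl fun l _ => ?_
      rw [smul_smul, mul_comm]
    have hcombo2 : ∑ jK : Fin K, ‖E (q (e.symm jK).1 (e.symm jK).2)‖ ^ 2
        = ∑ l, ‖τ l • E (Φ l)‖ ^ 2 := by
      calc ∑ jK : Fin K, ‖E (q (e.symm jK).1 (e.symm jK).2)‖ ^ 2
          = ∑ jK : Fin K, ‖∑ l, μ l jK • (τ l • E (Φ l))‖ ^ 2 := by
            refine Finset.sum_congr rfl fun jK _ => ?_; rw [hEq jK]
        _ = ∑ l, ‖τ l • E (Φ l)‖ ^ 2 := hapod_aux_combo μ hμ _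
    have hbound : ∑ l, ‖τ l • E (Φ l)‖ ^ 2 ≤ ερ ^ 2 := by
      have hzero : ∀ l : Fin K, (l : ℕ) < M → E (Φ l) = 0 := by
        intro l hl
        have hmem : Φ l ∈ W := by
          apply Submodule.subset_span
          exact ⟨⟨(l : ℕ), hl⟩, by congr 1⟩
        rw [hEdef]
        simp only
        rw [sub_eq_zero]
        have h := (Submodule.starProjection_eq_self_iff (K := W)).mpr hmem
        rw [Submodule.starProjection_apply] at h
        exact h.symm
      calc ∑ l, ‖τ l • E (Φ l)‖ ^ 2
          = ∑ l ∈ univ.filter (fun l : Fin K => M ≤ (l : ℕ)), ‖τ l • E (Φ l)‖ ^ 2 := by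
            rw [Finset.sum_filter]
            refine Finset.sum_congr rfl fun l _ => ?_
            by_cases h : M ≤ (l : ℕ)
            · rw [if_pos h]
            · rw [if_neg h, hzero l (not_le.mp h), smul_zero, norm_zero]
              norm_num
        _ ≤ ∑ l ∈ univ.filter (fun l : Fin K => M ≤ (l : ℕ)), τ l ^ 2 := by
            refine Finset.sum_le_sum fun l _ => ?_
            have h1 : ‖E (Φ l)‖ ≤ 1 := by
              have := hapod_aux_norm_le W (Φ l)
              rwa [hΦ.1 l] at this
            rw [norm_smul, Real.norm_eq_abs, mul_pow, sq_abs]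
            exact mul_le_of_le_one_right (sq_nonneg _)
              (by nlinarith [norm_nonneg (E (Φ l))])
        _ ≤ ερ ^ 2 := hroot
    rw [hsig, hre, hcombo2]
    exact hbound
  -- conclude
  calc ∑ i, ∑ m, ‖s i m - (Submodule.orthogonalProjectionOnto W (s i m) : V)‖ ^ 2
      = ∑ i, ∑ m, ‖E (s i m)‖ ^ 2 := rfl
    _ ≤ ∑ i, (ε i ^ 2 + ∑ n : Fin (N i), ‖E (q i n)‖ ^ 2) :=
        Finset.sum_le_sum fun i _ => step1 i
    _ = (∑ i, ∑ n : Fin (N i), ‖E (q i n)‖ ^ 2) + ∑ i, ε i ^ 2 := by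
        rw [Finset.sum_add_distrib, add_comm]
    _ ≤ ερ ^ 2 + ∑ i, ε i ^ 2 := add_le_add_left step2 _
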